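/- arXiv:2206.10426 — 3 statements merged into one kernel-verified Lean document; each statement's English description precedes it below -/
import Mathlib

section
/- Let (T_t) be a C₀-semigroup on a Banach space X and α ∈ (0,1]. Suppose there is C > 0 such that for all t > 1: ∫₀ᵗ ‖T_s x‖² ds ≤ C t^{2α} ‖x‖² for all x ∈ X, and ∫₀ᵗ ‖T_s* x*‖² ds ≤ C t^{2α} ‖x*‖² for all x* ∈ X*. Then ‖T_t‖ = O(t^α / √(log t)) as t → ∞. -/
open MeasureTheory Filter

set_option maxHeartbeats 1000000 in
/-- **Lemma.** Let `(T_t)` be a `C₀`-semigroup on a complex Banach space `X` and `α ∈ (0,1]`.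
If there is `C > 0` such that for all `t > 1`:
`∫₀ᵗ ‖T_s x‖² ds ≤ C t^{2α} ‖x‖²` for all `x ∈ X`, and
`∫₀ᵗ ‖T_s* x*‖² ds ≤ C t^{2α} ‖x*‖²` for all `x*` in the dual `X*`
(where `T_s* x* = x* ∘ T_s`), then `‖T_t‖ = O(t^α / √(log t))` as `t → ∞`. -/
theorem cesaro_bounds_imply_log_improvement
    {X : Type*} [NormedAddCommGroup X] [NormedSpace ℂ X] [CompleteSpace X]
    (α : ℝ) (hα0 : 0 < α) (hα1 : α ≤ 1)
    (T : ℝ → X →L[ℂ] X)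
    (hT0 : T 0 = 1)
    (hTsemigroup : ∀ s t : ℝ, 0 ≤ s → 0 ≤ t → T (s + t) = (T s).comp (T t))
    (hTcont : ∀ x : X, ContinuousOn (fun t => T t x) (Set.Ici (0 : ℝ)))
    (C : ℝ) (hC : 0 < C)
    (hCesaro : ∀ t : ℝ, 1 < t → ∀ x : X,
      ∫ s in (0 : ℝ)..t, ‖T s x‖ ^ 2 ≤ C * t ^ (2 * α) * ‖x‖ ^ 2)
    (hCesaroDual : ∀ t : ℝ, 1 < t → ∀ x' : StrongDual ℂ X,
      ∫ s in (0 : ℝ)..t, ‖x'.comp (T s)‖ ^ 2 ≤ C * t ^ (2 * α) * ‖x'‖ ^ 2) :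
    (fun t : ℝ => ‖T t‖) =O[atTop] fun t : ℝ => t ^ α / Real.sqrt (Real.log t) := by
  -- continuity of the (truncated) orbit maps
  have hTmax : ∀ x : X, Continuous fun s : ℝ => T (max s 0) x := by
    intro x
    exact (hTcont x).comp_continuous (continuous_id.max continuous_const)
      (fun s => Set.mem_Ici.2 (le_max_right _ _))
  -- Banach–Steinhaus: uniform bound on compact time intervals
  have hBS : ∀ b : ℝ, ∃ M : ℝ, 0 ≤ M ∧ ∀ s : ℝ, 0 ≤ s → s ≤ b → ‖T s‖ ≤ M := by
    intro b
    obtain ⟨M0, hM0⟩ := banach_steinhaus (g := fun i : Set.Icc (0:ℝ) (max b 0) => T i)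
      (fun x => by
        obtain ⟨Cx, hCx⟩ := (isCompact_Icc (a := (0:ℝ)) (b := max b 0)).exists_bound_of_continuousOn
          ((hTcont x).mono (fun s hs => hs.1))
        exact ⟨Cx, fun i => hCx i i.2⟩)
    refine ⟨max M0 0, le_max_right _ _, fun s hs hsb => ?_⟩
    exact le_trans (hM0 ⟨s, hs, le_trans hsb (le_max_left _ _)⟩) (le_max_left _ _)
  -- measurability of the dual orbit norms
  have hgm : ∀ x' : StrongDual ℂ X, Measurable fun s : ℝ => ‖x'.comp (T (max s 0))‖ := by
    intro x'
    apply LowerSemicontinuous.measurable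
    intro s y hy
    rcases lt_or_ge y 0 with h | h
    · exact Filter.Eventually.of_forall (fun u => lt_of_lt_of_le h (norm_nonneg _))
    · have : ¬ (∀ v : X, ‖(x'.comp (T (max s 0))) v‖ ≤ y * ‖v‖) := by
        intro hcon
        exact absurd (ContinuousLinearMap.opNorm_le_bound _ h hcon) (not_le.2 hy)
      push_neg at this
      obtain ⟨v, hv⟩ := this
      have hcont : Continuous fun u : ℝ => ‖(x'.comp (T (max u 0))) v‖ := by
        have : Continuous fun u : ℝ => x' (T (max u 0) v) := x'.continuous.comp (hTmax v)
        simpa [ContinuousLinearMap.comp_apply] using this.norm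
      have hopen : IsOpen {u : ℝ | y * ‖v‖ < ‖(x'.comp (T (max u 0))) v‖} :=
        isOpen_lt continuous_const hcont
      filter_upwards [hopen.mem_nhds hv] with u hu
      exact lt_of_mul_lt_mul_right
        (lt_of_lt_of_le hu ((x'.comp (T (max u 0))).le_opNorm v)) (norm_nonneg v)
  -- generic integrability of bounded measurable functions on intervals
  have hii : ∀ (f : ℝ → ℝ) (a b M : ℝ), Measurable f →
      (∀ s ∈ Set.uIoc a b, ‖f s‖ ≤ M) → IntervalIntegrable f volume a b := by
    intro f a b M hm hb
    rw [intervalIntegrable_iff]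
    haveI : IsFiniteMeasure (volume.restrict (Set.uIoc a b)) := by
      constructor
      rw [Measure.restrict_apply_univ]
      exact measure_Ioc_lt_top
    refine Integrable.mono' (integrable_const M) hm.aestronglyMeasurable ?_
    exact (ae_restrict_iff' measurableSet_uIoc).2 (Filter.Eventually.of_forall hb)
  -- integrability of primal orbit squares
  have hfi : ∀ (x : X) (a b : ℝ), 0 ≤ a → 0 ≤ b →
      IntervalIntegrable (fun s => ‖T s x‖ ^ 2) volume a b := by
    intro x a b ha hb
    apply ContinuousOn.intervalIntegrable
    have hsub : Set.uIcc a b ⊆ Set.Ici (0:ℝ) := fun s hs => le_trans (le_min ha hb) hs.1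
    exact (((hTcont x).mono hsub).norm.pow 2)
  -- integrability of the weighted primal orbit squares on [a,b] ⊆ [1,∞)
  have hfdi : ∀ (x : X) (a b : ℝ), 1 ≤ a → 1 ≤ b →
      IntervalIntegrable (fun s => ‖T s x‖ ^ 2 / s ^ 2) volume a b := by
    intro x a b ha hb
    apply ContinuousOn.intervalIntegrable
    have hsub : Set.uIcc a b ⊆ Set.Ici (1:ℝ) := fun s hs => le_trans (le_min ha hb) hs.1
    have h0 : Set.uIcc a b ⊆ Set.Ici (0:ℝ) := fun s hs => Set.mem_Ici.2 (le_trans zero_le_one (hsub hs))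
    exact (((hTcont x).mono h0).norm.pow 2).div (continuousOn_pow 2)
      (fun s hs => by have := hsub hs; simp only [Set.mem_Ici] at this; positivity)
  -- the dyadic estimate
  have hdyadic : ∀ (x : X) (n : ℕ),
      ∫ s in (1:ℝ)..(2:ℝ)^n, ‖T s x‖ ^ 2 / s ^ 2 ≤ 4 * C * n * ‖x‖ ^ 2 := by
    intro x n
    induction n with
    | zero => simp
    | succ n ih =>
      have h1 : (1:ℝ) ≤ 2 ^ n := one_le_pow₀ one_le_two
      have h2 : (2:ℝ) ^ n ≤ 2 ^ (n+1) := by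
        apply pow_le_pow_right₀ one_le_two (Nat.le_succ n)
      have hint1 := hfdi x 1 (2 ^ n) le_rfl h1
      have hint2 := hfdi x (2 ^ n) (2 ^ (n+1)) h1 (le_trans h1 h2)
      rw [← intervalIntegral.integral_add_adjacent_intervals hint1 hint2]
      have key : ∫ s in ((2:ℝ)^n)..((2:ℝ)^(n+1)), ‖T s x‖ ^ 2 / s ^ 2 ≤ 4 * C * ‖x‖ ^ 2 := by
        have step1 : ∫ s in ((2:ℝ)^n)..((2:ℝ)^(n+1)), ‖T s x‖ ^ 2 / s ^ 2
            ≤ ∫ s in ((2:ℝ)^n)..((2:ℝ)^(n+1)), ‖T s x‖ ^ 2 / ((2:ℝ)^n) ^ 2 := by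
          apply intervalIntegral.integral_mono_on h2 hint2
          · exact ((hfi x (2^n) (2^(n+1)) (by positivity) (by positivity)).div_const _)
          · intro s hs
            have hs1 : (2:ℝ)^n ≤ s := hs.1
            have hsp : (0:ℝ) < 2 ^ n := by positivity
            exact div_le_div_of_nonneg_left (sq_nonneg _) (by positivity) (by nlinarith)
        have step2 : ∫ s in ((2:ℝ)^n)..((2:ℝ)^(n+1)), ‖T s x‖ ^ 2 / ((2:ℝ)^n) ^ 2
            = (∫ s in ((2:ℝ)^n)..((2:ℝ)^(n+1)), ‖T s x‖ ^ 2) / ((2:ℝ)^n) ^ 2 := by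
          exact intervalIntegral.integral_div _ _
        have step3 : ∫ s in ((2:ℝ)^n)..((2:ℝ)^(n+1)), ‖T s x‖ ^ 2
            ≤ ∫ s in (0:ℝ)..((2:ℝ)^(n+1)), ‖T s x‖ ^ 2 := by
          rw [← intervalIntegral.integral_add_adjacent_intervals
            (hfi x 0 (2^n) le_rfl (by positivity)) (hfi x (2^n) (2^(n+1)) (by positivity) (by positivity))]
          have : 0 ≤ ∫ s in (0:ℝ)..((2:ℝ)^n), ‖T s x‖ ^ 2 :=
            intervalIntegral.integral_nonneg (by positivity) (fun u _ => by positivity)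
          linarith
        have step4 : ∫ s in (0:ℝ)..((2:ℝ)^(n+1)), ‖T s x‖ ^ 2
            ≤ C * ((2:ℝ)^(n+1)) ^ (2*α) * ‖x‖ ^ 2 := by
          apply hCesaro
          calc (1:ℝ) < 2 := one_lt_two
          _ ≤ 2^(n+1) := by exact le_self_pow₀ (by norm_num) (Nat.succ_ne_zero n)
        have step5 : C * ((2:ℝ)^(n+1)) ^ (2*α) * ‖x‖ ^ 2
            ≤ C * ((2:ℝ)^(n+1)) ^ 2 * ‖x‖ ^ 2 := by
          have h2n : (1:ℝ) ≤ 2^(n+1) := le_trans h1 h2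
          have : ((2:ℝ)^(n+1)) ^ (2*α) ≤ ((2:ℝ)^(n+1)) ^ (2:ℝ) := by
            apply Real.rpow_le_rpow_of_exponent_le h2n
            nlinarith
          have h22 : ((2:ℝ)^(n+1)) ^ (2:ℝ) = ((2:ℝ)^(n+1)) ^ (2:ℕ) := by
            rw [show ((2:ℝ):ℝ) = ((2:ℕ):ℝ) by norm_num, Real.rpow_natCast]
          rw [h22] at this
          have := mul_le_mul_of_nonneg_right (mul_le_mul_of_nonneg_left this hC.le) (sq_nonneg ‖x‖)
          linarith
        have hfin : C * ((2:ℝ)^(n+1)) ^ 2 * ‖x‖ ^ 2 / ((2:ℝ)^n) ^ 2 = 4 * C * ‖x‖ ^ 2 := by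
          have hp : ((2:ℝ)^n) ^ 2 ≠ 0 := by positivity
          field_simp
          ring
        calc ∫ s in ((2:ℝ)^n)..((2:ℝ)^(n+1)), ‖T s x‖ ^ 2 / s ^ 2
            ≤ (∫ s in ((2:ℝ)^n)..((2:ℝ)^(n+1)), ‖T s x‖ ^ 2) / ((2:ℝ)^n) ^ 2 := by
              rw [← step2]; exact step1
          _ ≤ C * ((2:ℝ)^(n+1)) ^ 2 * ‖x‖ ^ 2 / ((2:ℝ)^n) ^ 2 :=
              (div_le_div_iff_of_pos_right (by positivity)).2
                (le_trans step3 (le_trans step4 step5))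
          _ = 4 * C * ‖x‖ ^ 2 := hfin
      push_cast
      linarith

  -- rpow 2 = pow 2
  have hr2 : ∀ y : ℝ, y ^ (2:ℝ) = y ^ 2 := fun y => by
    rw [show (2:ℝ) = ((2:ℕ):ℝ) by norm_num, Real.rpow_natCast]
  -- main pointwise estimate
  have main : ∀ t : ℝ, 16 ≤ t → ‖T t‖ ≤ 4 * C * (t ^ α / Real.sqrt (Real.log t)) := by
    intro t ht
    have ht0 : (0:ℝ) < t := by linarith
    have ht1 : (1:ℝ) < t := by linarith
    have hlog1 : (1:ℝ) ≤ Real.log t := by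
      rw [Real.le_log_iff_exp_le ht0]
      calc Real.exp 1 ≤ 2.7182818286 := (Real.exp_one_lt_d9).le
      _ ≤ 16 := by norm_num
      _ ≤ t := ht
    have hlogpos : (0:ℝ) < Real.log t := lt_of_lt_of_le one_pos hlog1
    have hsqlogpos : (0:ℝ) < Real.sqrt (Real.log t) := Real.sqrt_pos.2 hlogpos
    set n : ℕ := ⌊Real.logb 2 t⌋₊ with hn
    have htpow : t ≤ 2 ^ (n+1) := by
      have h1 : Real.logb 2 t < (n:ℝ) + 1 := by
        rw [hn]; exact_mod_cast Nat.lt_floor_add_one (Real.logb 2 t)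
      calc t = (2:ℝ) ^ Real.logb 2 t := (Real.rpow_logb two_pos (by norm_num) ht0).symm
      _ ≤ (2:ℝ) ^ ((n:ℝ)+1) := Real.rpow_le_rpow_of_exponent_le one_le_two h1.le
      _ = (2:ℝ) ^ (n+1 : ℕ) := by
          rw [show ((n:ℝ)+1) = ((n+1 : ℕ):ℝ) by push_cast; ring, Real.rpow_natCast]
    have hnlog : ((n:ℝ) + 1) ≤ 3 * Real.log t := by
      have h1 : (n:ℝ) ≤ Real.logb 2 t := Nat.floor_le (Real.logb_nonneg one_lt_two ht1.le)
      have h2 : Real.logb 2 t ≤ 2 * Real.log t := by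
        rw [Real.logb, div_le_iff₀ (Real.log_pos one_lt_two)]
        nlinarith [Real.log_two_gt_d9, Real.log_nonneg ht1.le]
      linarith
    -- the primal weighted bound on [1, t]
    have hA : ∀ x : X, ∫ s in (1:ℝ)..t, ‖T s x‖ ^ 2 / s ^ 2
        ≤ 12 * C * Real.log t * ‖x‖ ^ 2 := by
      intro x
      have h1t : (1:ℝ) ≤ t := ht1.le
      have h2n1 : (1:ℝ) ≤ 2^(n+1) := le_trans h1t htpow
      have hsplit : ∫ s in (1:ℝ)..t, ‖T s x‖ ^ 2 / s ^ 2
          ≤ ∫ s in (1:ℝ)..(2:ℝ)^(n+1), ‖T s x‖ ^ 2 / s ^ 2 := by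
        rw [← intervalIntegral.integral_add_adjacent_intervals (hfdi x 1 t le_rfl h1t)
          (hfdi x t (2^(n+1)) h1t h2n1)]
        have : 0 ≤ ∫ s in t..(2:ℝ)^(n+1), ‖T s x‖ ^ 2 / s ^ 2 :=
          intervalIntegral.integral_nonneg htpow (fun u hu => by
            have hu0 : (0:ℝ) < u := lt_of_lt_of_le ht0 hu.1
            positivity)
        linarith
      have hdy := hdyadic x (n+1)
      push_cast at hdy
      have hcast : 4 * C * ((n:ℝ)+1) * ‖x‖^2 ≤ 12 * C * Real.log t * ‖x‖^2 := by
        have := mul_le_mul_of_nonneg_right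
          (mul_le_mul_of_nonneg_left hnlog (by positivity : (0:ℝ) ≤ 4*C)) (sq_nonneg ‖x‖)
        nlinarith
      linarith
    -- operator norm bound via duality
    have hbound : ∀ x : X, ‖T t x‖ ≤ 4 * C * (t ^ α / Real.sqrt (Real.log t)) * ‖x‖ := by
      intro x
      have hM : (0:ℝ) ≤ 4 * C * (t ^ α / Real.sqrt (Real.log t)) * ‖x‖ := by positivity
      apply NormedSpace.norm_le_dual_bound ℂ _ hM
      intro x'
      obtain ⟨M, hM0, hMb⟩ := hBS t
      set G : ℝ → ℝ := fun u => ‖x'.comp (T (max u 0))‖ with hG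
      set F : ℝ → ℝ := fun s => ‖T (max s 0) x‖ / s with hF
      have hGnonneg : ∀ u, 0 ≤ G u := fun u => by simp only [hG]; exact norm_nonneg _
      have hGmeas : Measurable G := hgm x'
      have hGb : ∀ u : ℝ, u ≤ t → G u ≤ ‖x'‖ * M := by
        intro u hu
        calc G u ≤ ‖x'‖ * ‖T (max u 0)‖ := ContinuousLinearMap.opNorm_comp_le _ _
        _ ≤ ‖x'‖ * M := mul_le_mul_of_nonneg_left
            (hMb _ (le_max_right _ _) (max_le hu ht0.le)) (norm_nonneg _)
      have hGcompmeas : Measurable fun s : ℝ => G (t - s) :=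
        hGmeas.comp (measurable_const.sub measurable_id)
      have hFmeas : Measurable F := (hTmax x).norm.measurable.div measurable_id
      have hFcont : ContinuousOn F (Set.Icc 1 t) := by
        apply ContinuousOn.div (hTmax x).norm.continuousOn continuousOn_id
        intro s hs
        have : (1:ℝ) ≤ s := hs.1
        exact ne_of_gt (by linarith : (0:ℝ) < s)
      obtain ⟨Kx, hKx⟩ := (isCompact_Icc (a := (1:ℝ)) (b := t)).exists_bound_of_continuousOn hFcont
      have hKx0 : (0:ℝ) ≤ Kx := le_trans (norm_nonneg (F 1)) (hKx 1 ⟨le_rfl, ht1.le⟩)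
      have hprod_int : IntervalIntegrable (fun s => G (t - s) * F s) volume 1 t := by
        apply hii _ 1 t ((‖x'‖ * M) * Kx) (hGcompmeas.mul hFmeas)
        intro s hs
        rw [Set.uIoc_of_le ht1.le] at hs
        simp only [Pi.mul_apply]
        rw [norm_mul]
        apply mul_le_mul
        · rw [Real.norm_of_nonneg (hGnonneg _)]
          exact hGb _ (by linarith [hs.1])
        · exact hKx s ⟨hs.1.le, hs.2⟩
        · exact norm_nonneg _
        · positivity
      have h0notin : (0:ℝ) ∉ Set.uIcc 1 t := fun h => by
        rcases Set.mem_uIcc.1 h with ⟨h1,h2⟩|⟨h1,h2⟩ <;> linarith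
      have hstep1 : ∫ s in (1:ℝ)..t, ‖x' (T t x)‖ * (1/s) = ‖x' (T t x)‖ * Real.log t := by
        rw [intervalIntegral.integral_const_mul, integral_one_div h0notin, div_one]
      have hstep2 : ∫ s in (1:ℝ)..t, ‖x' (T t x)‖ * (1/s)
          ≤ ∫ s in (1:ℝ)..t, G (t - s) * F s := by
        apply intervalIntegral.integral_mono_on ht1.le _ hprod_int
        · intro s hs
          have hs1 : (1:ℝ) ≤ s := hs.1
          have hst : s ≤ t := hs.2
          have hsp : (0:ℝ) < s := by linarith
          have hsg : T t = (T (t - s)).comp (T s) := by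
            have := hTsemigroup (t - s) s (by linarith) (by linarith)
            rwa [sub_add_cancel] at this
          have hid : x' (T t x) = (x'.comp (T (t - s))) (T s x) := by
            rw [hsg]; simp [ContinuousLinearMap.comp_apply]
          have hmx : max (t - s) 0 = t - s := max_eq_left (by linarith)
          have hms : max s 0 = s := max_eq_left hsp.le
          rw [hid]
          have h1 : ‖(x'.comp (T (t - s))) (T s x)‖ ≤ G (t - s) * ‖T s x‖ := by
            simp only [hG, hmx]
            exact (x'.comp (T (t - s))).le_opNorm _
          calc ‖(x'.comp (T (t-s))) (T s x)‖ * (1/s)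
              ≤ (G (t - s) * ‖T s x‖) * (1/s) :=
                mul_le_mul_of_nonneg_right h1 (by positivity)
          _ = G (t - s) * F s := by simp only [hF, hms]; ring
        · apply ContinuousOn.intervalIntegrable
          apply ContinuousOn.mul continuousOn_const
          apply ContinuousOn.div continuousOn_const continuousOn_id
          intro s hs
          rw [Set.uIcc_of_le ht1.le] at hs
          have : (1:ℝ) ≤ s := hs.1
          exact ne_of_gt (by linarith : (0:ℝ) < s)
      haveI : IsFiniteMeasure (volume.restrict (Set.Ioc (1:ℝ) t)) := by
        constructor; rw [Measure.restrict_apply_univ]; exact measure_Ioc_lt_top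
      have hconj : (2:ℝ).HolderConjugate 2 := by
        rw [Real.holderConjugate_iff]; norm_num
      have hG2 : MemLp (fun s => G (t - s)) (ENNReal.ofReal 2)
          (volume.restrict (Set.Ioc 1 t)) := by
        apply MemLp.of_bound hGcompmeas.aestronglyMeasurable (‖x'‖ * M)
        refine (ae_restrict_iff' measurableSet_Ioc).2 (Filter.Eventually.of_forall ?_)
        intro s hs
        rw [Real.norm_of_nonneg (hGnonneg _)]
        exact hGb _ (by linarith [hs.1])
      have hF2 : MemLp F (ENNReal.ofReal 2) (volume.restrict (Set.Ioc 1 t)) := by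
        apply MemLp.of_bound hFmeas.aestronglyMeasurable Kx
        refine (ae_restrict_iff' measurableSet_Ioc).2 (Filter.Eventually.of_forall ?_)
        intro s hs
        exact hKx s ⟨hs.1.le, hs.2⟩
      have hCS : ∫ s in (1:ℝ)..t, G (t - s) * F s ≤
          (∫ s in Set.Ioc (1:ℝ) t, (G (t - s)) ^ (2:ℝ)) ^ ((1:ℝ)/2) *
          (∫ s in Set.Ioc (1:ℝ) t, (F s) ^ (2:ℝ)) ^ ((1:ℝ)/2) := by
        rw [intervalIntegral.integral_of_le ht1.le]
        exact integral_mul_le_Lp_mul_Lq_of_nonneg hconj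
          ((ae_restrict_iff' measurableSet_Ioc).2
            (Filter.Eventually.of_forall fun s _ => hGnonneg _))
          ((ae_restrict_iff' measurableSet_Ioc).2
            (Filter.Eventually.of_forall fun s hs => by
              simp only [hF]
              have : (1:ℝ) < s := hs.1
              positivity))
          hG2 hF2
      -- the dual factor
      have hGint : ∀ a b : ℝ, a ≤ t → b ≤ t →
          IntervalIntegrable (fun u => G u ^ 2) volume a b := by
        intro a b hat hbt
        apply hii _ a b ((‖x'‖*M)^2) (hGmeas.pow_const 2)
        intro s hs
        have hst : s ≤ t := le_trans hs.2 (max_le hat hbt)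
        rw [Real.norm_of_nonneg (sq_nonneg _)]
        exact pow_le_pow_left₀ (hGnonneg _) (hGb _ hst) 2
      have hJ1 : ∫ s in Set.Ioc (1:ℝ) t, (G (t - s)) ^ 2 ≤ C * t ^ (2*α) * ‖x'‖^2 := by
        have e1 : ∫ s in Set.Ioc (1:ℝ) t, (G (t-s))^2 = ∫ s in (1:ℝ)..t, (G (t-s))^2 :=
          (intervalIntegral.integral_of_le ht1.le).symm
        have e2 : ∫ s in (1:ℝ)..t, (G (t-s))^2 = ∫ u in (0:ℝ)..(t-1), G u ^ 2 := by
          have h := intervalIntegral.integral_comp_sub_left (a := 1) (b := t)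
            (fun u => G u ^ 2) t
          rw [sub_self] at h
          exact h
        have e3 : ∫ u in (0:ℝ)..(t-1), G u ^ 2 ≤ ∫ u in (0:ℝ)..t, G u ^ 2 := by
          rw [← intervalIntegral.integral_add_adjacent_intervals
            (hGint 0 (t-1) ht0.le (by linarith)) (hGint (t-1) t (by linarith) le_rfl)]
          have : 0 ≤ ∫ u in (t-1)..t, G u ^ 2 :=
            intervalIntegral.integral_nonneg (by linarith) (fun u _ => sq_nonneg _)
          linarith
        have e4 : ∫ u in (0:ℝ)..t, G u ^ 2 = ∫ u in (0:ℝ)..t, ‖x'.comp (T u)‖^2 := by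
          apply intervalIntegral.integral_congr
          intro u hu
          rw [Set.uIcc_of_le ht0.le] at hu
          simp only [hG]
          rw [max_eq_left hu.1]
        rw [e1, e2]
        rw [e4] at e3
        exact le_trans e3 (hCesaroDual t ht1 x')
      -- the primal factor
      have hJ2 : ∫ s in Set.Ioc (1:ℝ) t, (F s) ^ 2 ≤ 12 * C * Real.log t * ‖x‖^2 := by
        have e1 : ∫ s in Set.Ioc (1:ℝ) t, (F s)^2 = ∫ s in (1:ℝ)..t, (F s)^2 :=
          (intervalIntegral.integral_of_le ht1.le).symm
        have e2 : ∫ s in (1:ℝ)..t, (F s)^2 = ∫ s in (1:ℝ)..t, ‖T s x‖^2/s^2 := by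
          apply intervalIntegral.integral_congr
          intro s hs
          rw [Set.uIcc_of_le ht1.le] at hs
          simp only [hF]
          rw [max_eq_left (by linarith [hs.1] : (0:ℝ) ≤ s), div_pow]
        rw [e1, e2]
        exact hA x
      -- assemble
      have hfac1 : (∫ s in Set.Ioc (1:ℝ) t, (G (t - s)) ^ (2:ℝ)) ^ ((1:ℝ)/2)
          ≤ Real.sqrt (C * t ^ (2*α) * ‖x'‖^2) := by
        rw [← Real.sqrt_eq_rpow]
        apply Real.sqrt_le_sqrt
        simp only [hr2]
        exact hJ1
      have hfac2 : (∫ s in Set.Ioc (1:ℝ) t, (F s) ^ (2:ℝ)) ^ ((1:ℝ)/2)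
          ≤ Real.sqrt (12 * C * Real.log t * ‖x‖^2) := by
        rw [← Real.sqrt_eq_rpow]
        apply Real.sqrt_le_sqrt
        simp only [hr2]
        exact hJ2
      have hchain : ‖x' (T t x)‖ * Real.log t ≤
          Real.sqrt (C * t ^ (2*α) * ‖x'‖^2) * Real.sqrt (12 * C * Real.log t * ‖x‖^2) := by
        rw [← hstep1]
        refine le_trans hstep2 (le_trans hCS ?_)
        apply mul_le_mul hfac1 hfac2
        · rw [← Real.sqrt_eq_rpow]; exact Real.sqrt_nonneg _
        · exact Real.sqrt_nonneg _
      -- simplify the square roots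
      have ht2α : t ^ (2*α) = (t ^ α)^2 := by
        rw [show (2*α) = α*2 by ring, Real.rpow_mul ht0.le,
          show ((2:ℝ)) = ((2:ℕ):ℝ) by norm_num, Real.rpow_natCast]
      have hsq1 : Real.sqrt (C * t ^ (2*α) * ‖x'‖^2) = Real.sqrt C * t ^ α * ‖x'‖ := by
        rw [Real.sqrt_mul (mul_nonneg hC.le (Real.rpow_nonneg ht0.le _)) (‖x'‖^2),
          Real.sqrt_sq (norm_nonneg _),
          Real.sqrt_mul hC.le, ht2α, Real.sqrt_sq (Real.rpow_nonneg ht0.le α)]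
      have hsq2 : Real.sqrt (12 * C * Real.log t * ‖x‖^2)
          = Real.sqrt (12 * C) * Real.sqrt (Real.log t) * ‖x‖ := by
        rw [Real.sqrt_mul (by positivity) (‖x‖^2), Real.sqrt_sq (norm_nonneg _),
          Real.sqrt_mul (by positivity : (0:ℝ) ≤ 12*C)]
      have hkey : Real.sqrt C * Real.sqrt (12*C) ≤ 4*C := by
        rw [← Real.sqrt_mul hC.le]
        have h12 : C*(12*C) ≤ (4*C)^2 := by nlinarith [sq_nonneg C]
        calc Real.sqrt (C*(12*C)) ≤ Real.sqrt ((4*C)^2) := Real.sqrt_le_sqrt h12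
        _ = 4*C := Real.sqrt_sq (by positivity)
      have hdivsqrt : Real.log t / Real.sqrt (Real.log t) = Real.sqrt (Real.log t) :=
        Real.div_sqrt
      apply le_of_mul_le_mul_right _ hlogpos
      calc ‖x' (T t x)‖ * Real.log t
          ≤ Real.sqrt (C * t ^ (2*α) * ‖x'‖^2) * Real.sqrt (12 * C * Real.log t * ‖x‖^2) :=
            hchain
      _ = (Real.sqrt C * Real.sqrt (12*C)) * (t ^ α * Real.sqrt (Real.log t) * ‖x‖ * ‖x'‖) := by
            rw [hsq1, hsq2]; ring
      _ ≤ (4*C) * (t ^ α * Real.sqrt (Real.log t) * ‖x‖ * ‖x'‖) :=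
            mul_le_mul_of_nonneg_right hkey (by positivity)
      _ = 4 * C * (t ^ α / Real.sqrt (Real.log t)) * ‖x‖ * ‖x'‖ * Real.log t := by
            have e : t ^ α / Real.sqrt (Real.log t) * Real.log t
                = t ^ α * Real.sqrt (Real.log t) := by
              rw [div_mul_eq_mul_div, mul_div_assoc, hdivsqrt]
            rw [← e]; ring
    exact ContinuousLinearMap.opNorm_le_bound _ (by positivity) hbound
  -- conclude
  rw [Asymptotics.isBigO_iff]
  refine ⟨4*C, ?_⟩
  filter_upwards [eventually_ge_atTop (16:ℝ)] with t ht
  have h := main t ht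
  have h0 : (0:ℝ) ≤ t ^ α / Real.sqrt (Real.log t) :=
    div_nonneg (Real.rpow_nonneg (by linarith) α) (Real.sqrt_nonneg _)
  rw [Real.norm_of_nonneg (norm_nonneg (T t)), Real.norm_of_nonneg h0]
  linarith
end

section
/- Let (T_t) be a C₀-semigroup on a Banach space X. If there exist constants C > 0 and 1 ≤ P < Q such that Q < t, then for all x ∈ X and x* ∈ X*: (Q − P)² |⟨T_t x, x*⟩|² ≤ (∫_P^Q ‖T_{t−s} x‖² ds)(∫₀^Q ‖T_s* x*‖² ds). -/
open MeasureTheory Filter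

/-- **Key inequality.** Let `(T_t)` be a `C₀`-semigroup on a complex Banach space `X`, and
let `1 ≤ P < Q < t`. Then for all `x ∈ X` and `x*` in the dual `X*`:
`(Q − P)² |⟨T_t x, x*⟩|² ≤ (∫_P^Q ‖T_{t−s} x‖² ds) (∫₀^Q ‖T_s* x*‖² ds)`,
where `T_s* x* = x* ∘ T_s`. -/
theorem semigroup_duality_inequality
    {X : Type*} [NormedAddCommGroup X] [NormedSpace ℂ X] [CompleteSpace X]
    (T : ℝ → X →L[ℂ] X)
    (hT0 : T 0 = 1)
    (hTsemigroup : ∀ s t : ℝ, 0 ≤ s → 0 ≤ t → T (s + t) = (T s).comp (T t))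
    (hTcont : ∀ x : X, ContinuousOn (fun t => T t x) (Set.Ici (0 : ℝ)))
    (t P Q : ℝ) (hP : 1 ≤ P) (hPQ : P < Q) (hQt : Q < t) :
    ∀ (x : X) (x' : StrongDual ℂ X),
      (Q - P) ^ 2 * ‖x' (T t x)‖ ^ 2
        ≤ (∫ s in P..Q, ‖T (t - s) x‖ ^ 2) * (∫ s in (0 : ℝ)..Q, ‖x'.comp (T s)‖ ^ 2) := by
  intro x x'
  have hP0 : (0 : ℝ) ≤ P := le_trans zero_le_one hP
  have hPQle : P ≤ Q := hPQ.le
  have hQ0 : (0 : ℝ) ≤ Q := hP0.trans hPQle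
  have hQtle : Q ≤ t := hQt.le
  -- uniform bound on the operator norms on [0, t]
  obtain ⟨C, hC⟩ : ∃ C, ∀ i : Set.Icc (0 : ℝ) t, ‖T i‖ ≤ C := by
    apply banach_steinhaus
    intro y
    obtain ⟨C, hC⟩ := (isCompact_Icc (a := (0:ℝ)) (b := t)).exists_bound_of_continuousOn
      ((hTcont y).mono Set.Icc_subset_Ici_self)
    exact ⟨C, fun i => hC i i.2⟩
  have hCnorm : ∀ s : ℝ, 0 ≤ s → s ≤ t → ‖T s‖ ≤ C := fun s h0 h1 => hC ⟨s, h0, h1⟩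
  have hC0 : 0 ≤ C := le_trans (norm_nonneg _) (hCnorm 0 le_rfl (hQ0.trans hQtle))
  -- the functions
  set f : ℝ → ℝ := fun s => ‖T (t - s) x‖ with hf_def
  set g : ℝ → ℝ := fun s => ‖x'.comp (T s)‖ with hg_def
  -- continuity of f on [P, Q]
  have hfcont : ContinuousOn f (Set.Icc P Q) := by
    apply ContinuousOn.norm
    apply (hTcont x).comp (by fun_prop)
    intro s hs
    exact Set.mem_Ici.mpr (by linarith [hs.2])
  -- auxiliary continuous family
  have hgycont : ∀ y : X, Continuous (fun s : ℝ => ‖x' (T (max s 0) y)‖) := by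
    intro y
    apply Continuous.norm
    exact x'.continuous.comp <| (hTcont y).comp_continuous (by fun_prop)
      (fun s => Set.mem_Ici.mpr (le_max_right _ _))
  -- lower semicontinuity of the extended g
  have hlsc : LowerSemicontinuous (fun s : ℝ => ‖x'.comp (T (max s 0))‖) := by
    intro s c hc
    rcases lt_or_ge c 0 with h0 | h0
    · exact Eventually.of_forall fun u => h0.trans_le (norm_nonneg _)
    · obtain ⟨y, hy⟩ : ∃ y, c * ‖y‖ < ‖(x'.comp (T (max s 0))) y‖ := by
        by_contra h
        push_neg at h
        exact absurd (ContinuousLinearMap.opNorm_le_bound _ h0 h) (not_le.mpr hc)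
      have hy0 : 0 < ‖y‖ := by
        rcases eq_or_lt_of_le (norm_nonneg y) with h | h
        · exfalso
          have hy' : y = 0 := norm_eq_zero.mp h.symm
          simp [hy'] at hy
        · exact h
      have hev : ∀ᶠ u in nhds s, c * ‖y‖ < ‖x' (T (max u 0) y)‖ :=
        ((hgycont y).continuousAt).eventually (eventually_gt_nhds hy)
      filter_upwards [hev] with u hu
      have hle : ‖x' (T (max u 0) y)‖ ≤ ‖x'.comp (T (max u 0))‖ * ‖y‖ :=
        (x'.comp (T (max u 0))).le_opNorm y
      exact lt_of_mul_lt_mul_right (lt_of_lt_of_le hu hle) (norm_nonneg y)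
  have hgmeas : Measurable (fun s : ℝ => ‖x'.comp (T (max s 0))‖) := hlsc.measurable
  -- a.e. equality of g with the extended version on sets of nonneg reals
  have hg_eq : ∀ s : ℝ, 0 ≤ s → ‖x'.comp (T (max s 0))‖ = g s := by
    intro s hs; simp [hg_def, max_eq_left hs]
  -- measurability/integrability facts
  have hgaesm : ∀ (A : Set ℝ), A ⊆ Set.Ici (0:ℝ) → MeasurableSet A →
      AEStronglyMeasurable g (volume.restrict A) := by
    intro A hA hAm
    refine hgmeas.aestronglyMeasurable.congr ?_
    refine (ae_restrict_iff' hAm).mpr (Eventually.of_forall fun s hs => hg_eq s (hA hs))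
  have hgbound : ∀ s : ℝ, 0 ≤ s → s ≤ t → g s ≤ ‖x'‖ * C := by
    intro s h0 h1
    calc g s ≤ ‖x'‖ * ‖T s‖ := ContinuousLinearMap.opNorm_comp_le _ _
      _ ≤ ‖x'‖ * C := mul_le_mul_of_nonneg_left (hCnorm s h0 h1) (norm_nonneg _)
  have hfbound : ∀ s ∈ Set.Icc P Q, f s ≤ C * ‖x‖ := by
    intro s hs
    calc f s ≤ ‖T (t - s)‖ * ‖x‖ := (T (t - s)).le_opNorm x
      _ ≤ C * ‖x‖ := mul_le_mul_of_nonneg_right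
        (hCnorm _ (by linarith [hs.2]) (by linarith [hs.1])) (norm_nonneg _)
  -- pointwise key inequality
  have hkey : ∀ s ∈ Set.Icc P Q, ‖x' (T t x)‖ ≤ f s * g s := by
    intro s hs
    have h1 : (0:ℝ) ≤ s := hP0.trans hs.1
    have h2 : (0:ℝ) ≤ t - s := by linarith [hs.2]
    have hTt : T t = (T s).comp (T (t - s)) := by
      have := hTsemigroup s (t - s) h1 h2
      rwa [add_sub_cancel] at this
    have : x' (T t x) = (x'.comp (T s)) (T (t - s) x) := by
      rw [hTt]; simp
    rw [this, mul_comm]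
    exact (x'.comp (T s)).le_opNorm (T (t - s) x)
  -- set up the restricted measures
  set μ := volume.restrict (Set.Ioc P Q) with hμ_def
  haveI : IsFiniteMeasure μ := by
    constructor
    rw [hμ_def, Measure.restrict_apply_univ]
    exact measure_Ioc_lt_top
  have hfaesm : AEStronglyMeasurable f μ :=
    (hfcont.mono Set.Ioc_subset_Icc_self).aestronglyMeasurable measurableSet_Ioc
  have hgaesm' : AEStronglyMeasurable g μ :=
    hgaesm _ (fun s hs => le_trans hP0 hs.1.le) measurableSet_Ioc
  have hIoc_ae : ∀ᵐ s ∂μ, s ∈ Set.Ioc P Q :=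
    (ae_restrict_iff' measurableSet_Ioc).mpr (Eventually.of_forall fun s hs => hs)
  have hf_mem : MemLp f (ENNReal.ofReal 2) μ := by
    refine MemLp.of_bound hfaesm (C * ‖x‖) ?_
    filter_upwards [hIoc_ae] with s hs
    rw [Real.norm_eq_abs, abs_of_nonneg (norm_nonneg _)]
    exact hfbound s (Set.Ioc_subset_Icc_self hs)
  have hg_mem : MemLp g (ENNReal.ofReal 2) μ := by
    refine MemLp.of_bound hgaesm' (‖x'‖ * C) ?_
    filter_upwards [hIoc_ae] with s hs
    rw [Real.norm_eq_abs, abs_of_nonneg (norm_nonneg _)]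
    exact hgbound s (hP0.trans hs.1.le) (hs.2.trans hQtle)
  -- Step 1: (Q - P) * ‖x' (T t x)‖ ≤ ∫ f * g
  have hfg_int : Integrable (fun s => f s * g s) μ := by
    refine MemLp.integrable le_rfl (MemLp.of_bound (hfaesm.mul hgaesm') ((C * ‖x‖) * (‖x'‖ * C)) ?_)
    filter_upwards [hIoc_ae] with s hs
    rw [Real.norm_eq_abs, abs_of_nonneg (mul_nonneg (norm_nonneg _) (norm_nonneg _))]
    exact mul_le_mul (hfbound s (Set.Ioc_subset_Icc_self hs))
      (hgbound s (hP0.trans hs.1.le) (hs.2.trans hQtle)) (norm_nonneg _)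
      (mul_nonneg hC0 (norm_nonneg _))
  have step1 : (Q - P) * ‖x' (T t x)‖ ≤ ∫ s, f s * g s ∂μ := by
    have hconst : ∫ _ : ℝ, ‖x' (T t x)‖ ∂μ = (Q - P) * ‖x' (T t x)‖ := by
      rw [integral_const, hμ_def, measureReal_def, Measure.restrict_apply_univ, Real.volume_Ioc,
        ENNReal.toReal_ofReal (by linarith), smul_eq_mul]
    rw [← hconst]
    refine setIntegral_mono_on (integrable_const _) hfg_int measurableSet_Ioc ?_
    intro s hs
    exact hkey s (Set.Ioc_subset_Icc_self hs)
  -- Step 2: Cauchy-Schwarz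
  have hconj : Real.HolderConjugate 2 2 := Real.HolderConjugate.two_two
  have step2 : ∫ s, f s * g s ∂μ ≤
      (∫ s, f s ^ (2:ℝ) ∂μ) ^ ((1:ℝ)/2) * (∫ s, g s ^ (2:ℝ) ∂μ) ^ ((1:ℝ)/2) :=
    integral_mul_le_Lp_mul_Lq_of_nonneg hconj
      (Eventually.of_forall fun s => norm_nonneg _)
      (Eventually.of_forall fun s => norm_nonneg _) hf_mem hg_mem
  -- convert rpow to pow
  have hrpow : ∀ h : ℝ → ℝ, (∫ s, h s ^ (2:ℝ) ∂μ) = ∫ s, h s ^ 2 ∂μ := by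
    intro h
    congr 1
    ext s
    rw [show (2:ℝ) = ((2:ℕ):ℝ) by norm_num, Real.rpow_natCast]
  have hfint2 : 0 ≤ ∫ s, f s ^ 2 ∂μ := integral_nonneg fun s => sq_nonneg _
  have hgint2 : 0 ≤ ∫ s, g s ^ 2 ∂μ := integral_nonneg fun s => sq_nonneg _
  -- combine: square both sides
  have hmain : (Q - P) ^ 2 * ‖x' (T t x)‖ ^ 2 ≤ (∫ s, f s ^ 2 ∂μ) * (∫ s, g s ^ 2 ∂μ) := by
    have hLHS : (Q - P) * ‖x' (T t x)‖ ≤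
        (∫ s, f s ^ 2 ∂μ) ^ ((1:ℝ)/2) * (∫ s, g s ^ 2 ∂μ) ^ ((1:ℝ)/2) := by
      calc (Q - P) * ‖x' (T t x)‖ ≤ ∫ s, f s * g s ∂μ := step1
        _ ≤ _ := by rw [← hrpow f, ← hrpow g]; exact step2
    have hsq := pow_le_pow_left₀ (mul_nonneg (by linarith) (norm_nonneg _)) hLHS 2
    calc (Q - P) ^ 2 * ‖x' (T t x)‖ ^ 2 = ((Q - P) * ‖x' (T t x)‖) ^ 2 := by ring
      _ ≤ ((∫ s, f s ^ 2 ∂μ) ^ ((1:ℝ)/2) * (∫ s, g s ^ 2 ∂μ) ^ ((1:ℝ)/2)) ^ 2 := hsq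
      _ = (∫ s, f s ^ 2 ∂μ) * (∫ s, g s ^ 2 ∂μ) := by
          rw [mul_pow, ← Real.rpow_natCast ((∫ s, f s ^ 2 ∂μ) ^ ((1:ℝ)/2)) 2,
            ← Real.rpow_natCast ((∫ s, g s ^ 2 ∂μ) ^ ((1:ℝ)/2)) 2,
            ← Real.rpow_mul hfint2, ← Real.rpow_mul hgint2]
          norm_num
  -- enlarge the second integral from Ioc P Q to Ioc 0 Q
  have hg2_intQ : IntegrableOn (fun s => g s ^ 2) (Set.Ioc 0 Q) := by
    haveI : IsFiniteMeasure (volume.restrict (Set.Ioc (0:ℝ) Q)) := by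
      constructor
      rw [Measure.restrict_apply_univ]
      exact measure_Ioc_lt_top
    refine MemLp.integrable le_rfl (MemLp.of_bound
      (((hgaesm _ (fun s hs => hs.1.le) measurableSet_Ioc)).pow 2) ((‖x'‖ * C) ^ 2) ?_)
    refine (ae_restrict_iff' measurableSet_Ioc).mpr (Eventually.of_forall fun s hs => ?_)
    rw [Real.norm_eq_abs, abs_of_nonneg (sq_nonneg _)]
    exact pow_le_pow_left₀ (norm_nonneg _) (hgbound s hs.1.le (hs.2.trans hQtle)) 2
  have hsubset : (∫ s, g s ^ 2 ∂μ) ≤ ∫ s in Set.Ioc (0:ℝ) Q, g s ^ 2 := by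
    refine setIntegral_mono_set hg2_intQ (Eventually.of_forall fun s => sq_nonneg _) ?_
    exact HasSubset.Subset.eventuallyLE (Set.Ioc_subset_Ioc_left hP0)
  -- conclude
  rw [intervalIntegral.integral_of_le hPQle, intervalIntegral.integral_of_le hQ0]
  calc (Q - P) ^ 2 * ‖x' (T t x)‖ ^ 2
      ≤ (∫ s, f s ^ 2 ∂μ) * (∫ s, g s ^ 2 ∂μ) := hmain
    _ ≤ (∫ s, f s ^ 2 ∂μ) * (∫ s in Set.Ioc (0:ℝ) Q, g s ^ 2) :=
        mul_le_mul_of_nonneg_left hsubset hfint2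
end

section
/- Let α > 1 and let (T_t) be a C₀-semigroup on a Banach space X such that for some C > 0 and all t > 1, ∫₀ᵗ ‖T_s x‖² ds ≤ C t^{2α} ‖x‖² for all x ∈ X, and similarly for the adjoint semigroup on X*. Then ‖T_t‖ = O(t^α). -/
open MeasureTheory Filter

/-- **Remark (1).** Let `α > 1` and let `(T_t)` be a `C₀`-semigroup on a complex Banach space
`X` such that for some `C > 0` and all `t > 1`, `∫₀ᵗ ‖T_s x‖² ds ≤ C t^{2α} ‖x‖²` for all
`x ∈ X`, and similarly `∫₀ᵗ ‖T_s* x*‖² ds ≤ C t^{2α} ‖x*‖²` for the adjoint semigroup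
`T_s* x* = x* ∘ T_s` acting on the dual `X*`. Then `‖T_t‖ = O(t^α)`. -/
theorem cesaro_bounds_imply_polynomial_growth
    {X : Type*} [NormedAddCommGroup X] [NormedSpace ℂ X] [CompleteSpace X]
    (α : ℝ) (hα : 1 < α)
    (T : ℝ → X →L[ℂ] X)
    (hT0 : T 0 = 1)
    (hTsemigroup : ∀ s t : ℝ, 0 ≤ s → 0 ≤ t → T (s + t) = (T s).comp (T t))
    (hTcont : ∀ x : X, ContinuousOn (fun t => T t x) (Set.Ici (0 : ℝ)))
    (C : ℝ) (hC : 0 < C)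
    (hCesaro : ∀ t : ℝ, 1 < t → ∀ x : X,
      ∫ s in (0 : ℝ)..t, ‖T s x‖ ^ 2 ≤ C * t ^ (2 * α) * ‖x‖ ^ 2)
    (hCesaroDual : ∀ t : ℝ, 1 < t → ∀ x' : StrongDual ℂ X,
      ∫ s in (0 : ℝ)..t, ‖x'.comp (T s)‖ ^ 2 ≤ C * t ^ (2 * α) * ‖x'‖ ^ 2) :
    (fun t : ℝ => ‖T t‖) =O[atTop] fun t : ℝ => t ^ α := by
  -- Step 1: uniform bound on `[1,2]` via Banach–Steinhaus.
  obtain ⟨M, hM⟩ : ∃ M, ∀ r : Set.Icc (1 : ℝ) 2, ‖T r‖ ≤ M := by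
    apply banach_steinhaus (g := fun r : Set.Icc (1 : ℝ) 2 => T r)
    intro x
    obtain ⟨B, hB⟩ := (isCompact_Icc (a := (1 : ℝ)) (b := 2)).exists_bound_of_continuousOn
      ((hTcont x).mono (fun r hr => le_trans zero_le_one hr.1))
    exact ⟨B, fun r => hB r r.2⟩
  set M₀ : ℝ := max M 1 with hM₀def
  have hM₀1 : (1 : ℝ) ≤ M₀ := le_max_right _ _
  have hM₀0 : (0 : ℝ) < M₀ := lt_of_lt_of_le one_pos hM₀1
  have hM₀ : ∀ r : ℝ, r ∈ Set.Icc (1 : ℝ) 2 → ‖T r‖ ≤ M₀ :=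
    fun r hr => le_trans (hM ⟨r, hr⟩) (le_max_left _ _)
  -- Key pointwise estimate
  have key : ∀ t : ℝ, 3 ≤ t → ∀ x : X, ‖T t x‖ ≤ M₀ * Real.sqrt C * t ^ α * ‖x‖ := by
    intro t ht x
    have ht0 : (0 : ℝ) < t := lt_of_lt_of_le (by norm_num) ht
    have ht1 : (1 : ℝ) < t := lt_of_lt_of_le (by norm_num) ht
    -- continuity of s ↦ ‖T s x‖ ^ 2 on [0, ∞)
    have hcont : ContinuousOn (fun s : ℝ => ‖T s x‖ ^ 2) (Set.Ici (0 : ℝ)) := by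
      exact ((hTcont x).norm.pow 2)
    have hint : IntervalIntegrable (fun s : ℝ => ‖T s x‖ ^ 2) volume 0 t := by
      apply ContinuousOn.intervalIntegrable
      apply hcont.mono
      rw [Set.uIcc_of_le ht0.le]
      exact fun s hs => hs.1
    have hint' : IntervalIntegrable (fun s : ℝ => ‖T s x‖ ^ 2) volume (t - 2) (t - 1) := by
      apply ContinuousOn.intervalIntegrable
      apply hcont.mono
      rw [Set.uIcc_of_le (by linarith)]
      intro s hs
      have : (1 : ℝ) ≤ s := by
        have := hs.1; linarith
      exact le_trans zero_le_one this
    -- pointwise bound on [t-2, t-1]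
    have hptw : ∀ s ∈ Set.Icc (t - 2) (t - 1), ‖T t x‖ ^ 2 ≤ M₀ ^ 2 * ‖T s x‖ ^ 2 := by
      intro s hs
      have hs1 : (1 : ℝ) ≤ s := by have := hs.1; linarith
      have hs0 : (0 : ℝ) ≤ s := le_trans zero_le_one hs1
      have hts : t - s ∈ Set.Icc (1 : ℝ) 2 := by
        constructor
        · have := hs.2; linarith
        · have := hs.1; linarith
      have hsplit : T t x = T (t - s) (T s x) := by
        have := hTsemigroup (t - s) s (le_trans zero_le_one hts.1) hs0
        rw [sub_add_cancel] at this
        rw [this]; rfl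
      have : ‖T t x‖ ≤ M₀ * ‖T s x‖ := by
        rw [hsplit]
        calc ‖T (t - s) (T s x)‖ ≤ ‖T (t - s)‖ * ‖T s x‖ := (T (t - s)).le_opNorm _
          _ ≤ M₀ * ‖T s x‖ := by
              exact mul_le_mul_of_nonneg_right (hM₀ _ hts) (norm_nonneg _)
      calc ‖T t x‖ ^ 2 ≤ (M₀ * ‖T s x‖) ^ 2 := by
            exact pow_le_pow_left₀ (norm_nonneg _) this 2
        _ = M₀ ^ 2 * ‖T s x‖ ^ 2 := by ring
    -- integrate over [t-2, t-1]
    have step1 : ‖T t x‖ ^ 2 ≤ ∫ s in (t - 2)..(t - 1), M₀ ^ 2 * ‖T s x‖ ^ 2 := by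
      have hconst : (∫ _ in (t - 2)..(t - 1), ‖T t x‖ ^ 2) = ‖T t x‖ ^ 2 := by
        rw [intervalIntegral.integral_const]
        have : t - 1 - (t - 2) = 1 := by ring
        rw [this, one_smul]
      rw [← hconst]
      apply intervalIntegral.integral_mono_on (by linarith)
        intervalIntegrable_const (hint'.const_mul _)
      exact hptw
    have step2 : (∫ s in (t - 2)..(t - 1), M₀ ^ 2 * ‖T s x‖ ^ 2)
        ≤ M₀ ^ 2 * (C * t ^ (2 * α) * ‖x‖ ^ 2) := by
      rw [intervalIntegral.integral_const_mul]
      apply mul_le_mul_of_nonneg_left _ (by positivity)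
      calc (∫ s in (t - 2)..(t - 1), ‖T s x‖ ^ 2)
          ≤ ∫ s in (0 : ℝ)..t, ‖T s x‖ ^ 2 := by
            apply intervalIntegral.integral_mono_interval (by linarith) (by linarith)
              (by linarith) _ hint
            filter_upwards with s
            positivity
        _ ≤ C * t ^ (2 * α) * ‖x‖ ^ 2 := hCesaro t ht1 x
    have hsq : ‖T t x‖ ^ 2 ≤ (M₀ * Real.sqrt C * t ^ α * ‖x‖) ^ 2 := by
      have hrw : (M₀ * Real.sqrt C * t ^ α * ‖x‖) ^ 2
          = M₀ ^ 2 * (C * t ^ (2 * α) * ‖x‖ ^ 2) := by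
        have h1 : Real.sqrt C ^ 2 = C := Real.sq_sqrt hC.le
        have h2 : (t ^ α) ^ 2 = t ^ (2 * α) := by
          rw [← Real.rpow_natCast (t ^ α) 2, ← Real.rpow_mul ht0.le]
          norm_num
          ring_nf
        calc (M₀ * Real.sqrt C * t ^ α * ‖x‖) ^ 2
            = M₀ ^ 2 * (Real.sqrt C ^ 2 * ((t ^ α) ^ 2 * ‖x‖ ^ 2)) := by ring
          _ = M₀ ^ 2 * (C * t ^ (2 * α) * ‖x‖ ^ 2) := by rw [h1, h2]; ring
      rw [hrw]
      exact le_trans step1 step2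
    have hb : (0 : ℝ) ≤ M₀ * Real.sqrt C * t ^ α * ‖x‖ := by positivity
    exact (pow_le_pow_iff_left₀ (norm_nonneg _) hb two_ne_zero).mp hsq
  -- Conclude Big-O
  rw [Asymptotics.isBigO_iff]
  refine ⟨M₀ * Real.sqrt C, ?_⟩
  filter_upwards [eventually_ge_atTop (3 : ℝ)] with t ht
  have ht0 : (0 : ℝ) < t := lt_of_lt_of_le (by norm_num) ht
  have htα : (0 : ℝ) ≤ t ^ α := Real.rpow_nonneg ht0.le _
  rw [Real.norm_eq_abs, Real.norm_eq_abs, abs_of_nonneg (norm_nonneg _),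
    abs_of_nonneg htα]
  apply ContinuousLinearMap.opNorm_le_bound _ (by positivity)
  intro x
  calc ‖T t x‖ ≤ M₀ * Real.sqrt C * t ^ α * ‖x‖ := key t ht x
    _ = M₀ * Real.sqrt C * t ^ α * ‖x‖ := rfl
end
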